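/- arXiv:1507.01061 — 6 statements merged into one kernel-verified Lean document; each statement's English description precedes it below -/
import Mathlib

section
/- Let C > 0. There exists a constant C' > 0 depending only on C such that for every convex element K(a,b,ã,b̃) (i.e. a,b,ã,b̃ > 0 with ã/a + b̃/b > 1) the following two implications hold: (i) if ã/a ≤ C, b̃/b ≤ C and sin α ≥ 1/C (conditions (Δ1) and (D2) with constant C), then |l| ≤ C'·s and sin α ≥ 1/C' (conditions (Δ2) and (D2) with constant C'); (ii) if |l| ≤ C·s and sin α ≥ 1/C (conditions (Δ2) and (D2) with constant C), then ã/a ≤ C', b̃/b ≤ C' and sin α ≥ 1/C' (conditions (Δ1) and (D2) with constant C'). In other words, the pairs of conditions [Δ1, D2] and [Δ2, D2] are equivalent on convex elements K(a,b,ã,b̃). -/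
set_option maxHeartbeats 1000000

noncomputable section

/-- The Euclidean plane. -/
abbrev E2 := EuclideanSpace ℝ (Fin 2)

/-- The point (x, y) of the Euclidean plane. -/
def pt2 (x y : ℝ) : E2 := WithLp.toLp 2 ![x, y]

/-- Length of the side `l` joining `V3 = (ta, tb)` and `V4 = (0, b)` of `K(a,b,ta,tb)`. -/
def lenl (b ta tb : ℝ) : ℝ := Real.sqrt (ta ^ 2 + (b - tb) ^ 2)

/-- The minimum of the four side lengths of `K(a,b,ta,tb)`. -/
def sideMin (a b ta tb : ℝ) : ℝ :=
  min (min a b) (min (lenl b ta tb) (Real.sqrt ((a - ta) ^ 2 + tb ^ 2)))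

/-- The sine of the interior angle α at `V4 = (0,b)` of the triangle with vertices
`V2 = (a,0)`, `V3 = (ta,tb)`, `V4 = (0,b)`. -/
def sinAlpha (a b ta tb : ℝ) : ℝ :=
  Real.sin (EuclideanGeometry.angle (pt2 a 0) (pt2 0 b) (pt2 ta tb))

open scoped RealInnerProductSpace

lemma pt2_fst (x y : ℝ) : pt2 x y 0 = x := rfl
lemma pt2_snd (x y : ℝ) : pt2 x y 1 = y := rfl

lemma pt2_inner (x y z w : ℝ) : ⟪pt2 x y, pt2 z w⟫ = x * z + y * w := by
  rw [PiLp.inner_apply]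
  simp [Fin.sum_univ_two, pt2_fst, pt2_snd]
  ring

lemma pt2_sub (x y z w : ℝ) : pt2 x y - pt2 z w = pt2 (x - z) (y - w) := by
  ext i; fin_cases i <;> simp [pt2]

/-- Key formula: `sin α · (d · |l|) = b·ta + a·tb − a·b` (twice the area of the triangle). -/
lemma sinAlpha_mul (a b ta tb : ℝ) (h : a * b < b * ta + a * tb) :
    sinAlpha a b ta tb * (Real.sqrt (a ^ 2 + b ^ 2) * lenl b ta tb)
      = b * ta + a * tb - a * b := by
  have hang : sinAlpha a b ta tb
      = Real.sin (InnerProductGeometry.angle (pt2 a (-b)) (pt2 ta (tb - b))) := by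
    rw [sinAlpha, EuclideanGeometry.angle]
    have h1 : pt2 a 0 -ᵥ pt2 0 b = pt2 a (-b) := by
      rw [vsub_eq_sub, pt2_sub]; norm_num
    have h2 : pt2 ta tb -ᵥ pt2 0 b = pt2 ta (tb - b) := by
      rw [vsub_eq_sub, pt2_sub]; norm_num
    rw [h1, h2]
  have key := InnerProductGeometry.sin_angle_mul_norm_mul_norm (pt2 a (-b)) (pt2 ta (tb - b))
  have hn1 : ‖pt2 a (-b)‖ = Real.sqrt (a ^ 2 + b ^ 2) := by
    rw [EuclideanSpace.norm_eq]
    simp only [Fin.sum_univ_two, pt2_fst, pt2_snd, Real.norm_eq_abs, sq_abs]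
    rw [show a ^ 2 + (-b) ^ 2 = a ^ 2 + b ^ 2 by ring]
  have hn2 : ‖pt2 ta (tb - b)‖ = lenl b ta tb := by
    rw [EuclideanSpace.norm_eq, lenl]
    simp only [Fin.sum_univ_two, pt2_fst, pt2_snd, Real.norm_eq_abs, sq_abs]
    rw [show ta ^ 2 + (tb - b) ^ 2 = ta ^ 2 + (b - tb) ^ 2 by ring]
  rw [hn1, hn2, pt2_inner, pt2_inner, pt2_inner] at key
  rw [hang, key]
  rw [show (a * a + -b * -b) * (ta * ta + (tb - b) * (tb - b))
        - (a * ta + -b * (tb - b)) * (a * ta + -b * (tb - b))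
      = (b * ta + a * tb - a * b) ^ 2 by ring]
  exact Real.sqrt_sq (by linarith)

lemma le_mul_min (C' L u v : ℝ) (h1 : L ≤ C' * u) (h2 : L ≤ C' * v) :
    L ≤ C' * min u v := by
  rcases min_cases u v with ⟨h, _⟩ | ⟨h, _⟩ <;> rw [h] <;> assumption

/-- Pure algebra for direction (i). -/
lemma core1 (C a b ta tb d L r S : ℝ) (hC : 0 < C) (ha : 0 < a) (hb : 0 < b)
    (hL : 0 < L) (hd : 0 < d) (hr : 0 < r) (hda : a ≤ d) (hdb : b ≤ d)
    (hkey : S * (d * L) = b * ta + a * tb - a * b)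
    (hdr : b * ta + a * tb - a * b ≤ d * r)
    (h1 : ta ≤ C * a) (h2 : tb ≤ C * b) (h3 : 1 / C ≤ S) :
    L ≤ (2 * C ^ 2 + C + 1) * a ∧ L ≤ (2 * C ^ 2 + C + 1) * b ∧
      L ≤ (2 * C ^ 2 + C + 1) * L ∧ L ≤ (2 * C ^ 2 + C + 1) * r := by
  have hstep : 1 / C * (d * L) ≤ b * ta + a * tb - a * b := by
    calc 1 / C * (d * L) ≤ S * (d * L) :=
          mul_le_mul_of_nonneg_right h3 (mul_pos hd hL).le
      _ = _ := hkey
  have h4 : d * L ≤ C * (b * ta + a * tb - a * b) := by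
    rw [one_div, inv_mul_le_iff₀ hC] at hstep; exact hstep
  have hcross2 : b * ta + a * tb - a * b ≤ 2 * C * (a * b) := by nlinarith
  have h5 : d * L ≤ 2 * C ^ 2 * (a * b) := by nlinarith
  refine ⟨?_, ?_, ?_, ?_⟩
  · nlinarith [mul_le_mul_of_nonneg_right hdb hL.le, mul_pos ha hb,
      mul_pos (mul_pos ha hb) hC]
  · nlinarith [mul_le_mul_of_nonneg_right hda hL.le, mul_pos ha hb,
      mul_pos (mul_pos ha hb) hC]
  · nlinarith
  · have h6 : d * L ≤ C * (d * r) := by nlinarith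
    nlinarith [mul_pos hd hr, mul_pos (mul_pos hd hr) (mul_pos hC hC)]

/-- Pure algebra for direction (ii). -/
lemma core2 (C a b ta tb L sm : ℝ) (hC : 0 < C) (ha : 0 < a) (hb : 0 < b)
    (hta : 0 < ta) (hL : 0 < L) (hL2 : L ^ 2 = ta ^ 2 + (b - tb) ^ 2)
    (hsa : sm ≤ a) (hsb : sm ≤ b) (h1 : L ≤ C * sm) :
    ta / a ≤ 2 * C ^ 2 + C + 1 ∧ tb / b ≤ 2 * C ^ 2 + C + 1 := by
  have htaL : ta ≤ L := by nlinarith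
  have htbL : tb - b ≤ L := by nlinarith [sq_nonneg (L - (tb - b)), sq_nonneg ta]
  constructor
  · rw [div_le_iff₀ ha]; nlinarith
  · rw [div_le_iff₀ hb]; nlinarith

/-- The pairs of conditions [Δ1, D2] and [Δ2, D2] are equivalent on convex elements
`K(a,b,ta,tb)`, with constants depending only on each other. -/
theorem delta1_D2_iff_delta2_D2 (C : ℝ) (hC : 0 < C) :
    ∃ C' : ℝ, 0 < C' ∧
      ∀ a b ta tb : ℝ, 0 < a → 0 < b → 0 < ta → 0 < tb →
        1 < ta / a + tb / b →
        ((ta / a ≤ C ∧ tb / b ≤ C ∧ 1 / C ≤ sinAlpha a b ta tb) →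
          (lenl b ta tb ≤ C' * sideMin a b ta tb ∧ 1 / C' ≤ sinAlpha a b ta tb)) ∧
        ((lenl b ta tb ≤ C * sideMin a b ta tb ∧ 1 / C ≤ sinAlpha a b ta tb) →
          (ta / a ≤ C' ∧ tb / b ≤ C' ∧ 1 / C' ≤ sinAlpha a b ta tb)) := by
  refine ⟨2 * C ^ 2 + C + 1, by positivity, ?_⟩
  intro a b ta tb ha hb hta htb hconv
  have hCC' : C ≤ 2 * C ^ 2 + C + 1 := by nlinarith
  have hsin_mono : 1 / C ≤ sinAlpha a b ta tb →
      1 / (2 * C ^ 2 + C + 1) ≤ sinAlpha a b ta tb := fun h =>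
    le_trans (one_div_le_one_div_of_le hC hCC') h
  have hcross : a * b < b * ta + a * tb := by
    rw [div_add_div _ _ ha.ne' hb.ne', lt_div_iff₀ (mul_pos ha hb)] at hconv
    nlinarith [hconv]
  have hL : 0 < lenl b ta tb := Real.sqrt_pos.mpr (by positivity)
  have hL2 : (lenl b ta tb) ^ 2 = ta ^ 2 + (b - tb) ^ 2 := Real.sq_sqrt (by positivity)
  have hd : 0 < Real.sqrt (a ^ 2 + b ^ 2) := Real.sqrt_pos.mpr (by positivity)
  have hd2 : (Real.sqrt (a ^ 2 + b ^ 2)) ^ 2 = a ^ 2 + b ^ 2 := Real.sq_sqrt (by positivity)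
  have hr : 0 < Real.sqrt ((a - ta) ^ 2 + tb ^ 2) :=
    Real.sqrt_pos.mpr (by nlinarith [sq_nonneg (a - ta)])
  have hr2 : (Real.sqrt ((a - ta) ^ 2 + tb ^ 2)) ^ 2 = (a - ta) ^ 2 + tb ^ 2 :=
    Real.sq_sqrt (by positivity)
  have hda : a ≤ Real.sqrt (a ^ 2 + b ^ 2) := by nlinarith
  have hdb : b ≤ Real.sqrt (a ^ 2 + b ^ 2) := by nlinarith
  have hkey := sinAlpha_mul a b ta tb hcross
  have hcross_dr : b * ta + a * tb - a * b
      ≤ Real.sqrt (a ^ 2 + b ^ 2) * Real.sqrt ((a - ta) ^ 2 + tb ^ 2) := by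
    have hsq : (b * ta + a * tb - a * b) ^ 2
        ≤ (Real.sqrt (a ^ 2 + b ^ 2) * Real.sqrt ((a - ta) ^ 2 + tb ^ 2)) ^ 2 := by
      rw [mul_pow, hd2, hr2]
      nlinarith [sq_nonneg (a * (ta - a) - b * tb)]
    nlinarith [mul_pos hd hr, hcross, hsq]
  constructor
  · rintro ⟨h1, h2, h3⟩
    have hta' : ta ≤ C * a := by rw [div_le_iff₀ ha] at h1; linarith
    have htb' : tb ≤ C * b := by rw [div_le_iff₀ hb] at h2; linarith
    obtain ⟨hLa, hLb, hLL, hLr⟩ :=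
      core1 C a b ta tb (Real.sqrt (a ^ 2 + b ^ 2)) (lenl b ta tb)
        (Real.sqrt ((a - ta) ^ 2 + tb ^ 2)) (sinAlpha a b ta tb)
        hC ha hb hL hd hr hda hdb hkey hcross_dr hta' htb' h3
    refine ⟨?_, hsin_mono h3⟩
    unfold sideMin
    exact le_mul_min _ _ _ _ (le_mul_min _ _ _ _ hLa hLb) (le_mul_min _ _ _ _ hLL hLr)
  · rintro ⟨h1, h2⟩
    have hsa : sideMin a b ta tb ≤ a := le_trans (min_le_left _ _) (min_le_left _ _)
    have hsb : sideMin a b ta tb ≤ b := le_trans (min_le_left _ _) (min_le_right _ _)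
    obtain ⟨g1, g2⟩ :=
      core2 C a b ta tb (lenl b ta tb) (sideMin a b ta tb)
        hC ha hb hta hL hL2 hsa hsb h1
    exact ⟨g1, g2, hsin_mono h2⟩
end
end

section
/- Let B : ℝ² → ℝ² be an invertible linear map and let w₁, w₂ be nonzero vectors in ℝ². Let α ∈ [0,π] be the angle between w₁ and w₂, let ᾱ ∈ [0,π] be the angle between B w₁ and B w₂, and let κ(B) = ‖B‖·‖B⁻¹‖ (operator norms). Then (2/(κ(B)·π))·α ≤ ᾱ ≤ π·(1 − 2/(κ(B)·π)) + (2/(κ(B)·π))·α. -/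
noncomputable section

open Real

set_option maxHeartbeats 1000000 in
open InnerProductGeometry in
/-- Key algebraic inequality: `1 - cos ᾱ ≥ (1 - cos α)/κ²`. -/
lemma cos_angle_bound (B : E2 ≃L[ℝ] E2) (w₁ w₂ : E2) (hw₁ : w₁ ≠ 0) (hw₂ : w₂ ≠ 0) :
    (1 - Real.cos (angle w₁ w₂)) /
        (‖(B : E2 →L[ℝ] E2)‖ * ‖(B.symm : E2 →L[ℝ] E2)‖) ^ 2 ≤
      1 - Real.cos (angle (B w₁) (B w₂)) := by
  set M := ‖(B : E2 →L[ℝ] E2)‖ with hM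
  set N := ‖(B.symm : E2 →L[ℝ] E2)‖ with hN
  set p := ‖w₁‖ with hp
  set q := ‖w₂‖ with hq
  set a := ‖B w₁‖ with ha
  set b := ‖B w₂‖ with hb
  set c := (inner ℝ (B w₁) (B w₂) : ℝ) with hc
  set d := (inner ℝ w₁ w₂ : ℝ) with hd
  have hp0 : 0 < p := norm_pos_iff.mpr hw₁
  have hq0 : 0 < q := norm_pos_iff.mpr hw₂
  have hBw₁ : B w₁ ≠ 0 := fun h => hw₁ (by simpa using congrArg B.symm h)
  have hBw₂ : B w₂ ≠ 0 := fun h => hw₂ (by simpa using congrArg B.symm h)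
  have ha0 : 0 < a := norm_pos_iff.mpr hBw₁
  have hb0 : 0 < b := norm_pos_iff.mpr hBw₂
  have hMa : a ≤ M * p := (B : E2 →L[ℝ] E2).le_opNorm w₁
  have hMb : b ≤ M * q := (B : E2 →L[ℝ] E2).le_opNorm w₂
  have hNp : p ≤ N * a := by
    have := (B.symm : E2 →L[ℝ] E2).le_opNorm (B w₁)
    simpa using this
  have hNq : q ≤ N * b := by
    have := (B.symm : E2 →L[ℝ] E2).le_opNorm (B w₂)
    simpa using this
  have hM0 : 0 < M := by nlinarith
  have hN0 : 0 < N := by nlinarith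
  -- Cauchy–Schwarz for the PSD form `x y ↦ N² ⟪Bx, By⟫ - ⟪x, y⟫`
  have hpsd : ∀ t : ℝ,
      0 ≤ (N ^ 2 * b ^ 2 - q ^ 2) * (t * t) + (2 * (N ^ 2 * c - d)) * t
          + (N ^ 2 * a ^ 2 - p ^ 2) := by
    intro t
    have hx : ‖w₁ + t • w₂‖ ≤ N * ‖B (w₁ + t • w₂)‖ := by
      have := (B.symm : E2 →L[ℝ] E2).le_opNorm (B (w₁ + t • w₂))
      simpa using this
    have h1 : ‖w₁ + t • w₂‖ ^ 2 ≤ N ^ 2 * ‖B (w₁ + t • w₂)‖ ^ 2 := by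
      nlinarith [norm_nonneg (w₁ + t • w₂), norm_nonneg (B (w₁ + t • w₂))]
    have e1 : ‖w₁ + t • w₂‖ ^ 2 = p ^ 2 + 2 * (t * d) + t ^ 2 * q ^ 2 := by
      rw [norm_add_sq_real, real_inner_smul_right, norm_smul, mul_pow, Real.norm_eq_abs, sq_abs]
    have e2 : ‖B (w₁ + t • w₂)‖ ^ 2 = a ^ 2 + 2 * (t * c) + t ^ 2 * b ^ 2 := by
      rw [map_add, map_smul, norm_add_sq_real, real_inner_smul_right, norm_smul, mul_pow,
        Real.norm_eq_abs, sq_abs]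
    nlinarith [h1]
  have hcs : (N ^ 2 * c - d) ^ 2 ≤ (N ^ 2 * a ^ 2 - p ^ 2) * (N ^ 2 * b ^ 2 - q ^ 2) := by
    have := discrim_le_zero hpsd
    rw [discrim] at this
    nlinarith [this]
  have hYpos : 0 ≤ N ^ 2 * (a * b) - p * q := by nlinarith
  have hsq : (N ^ 2 * a ^ 2 - p ^ 2) * (N ^ 2 * b ^ 2 - q ^ 2)
      ≤ (N ^ 2 * (a * b) - p * q) ^ 2 := by nlinarith [sq_nonneg (a * q - b * p)]
  have key : p * q - d ≤ N ^ 2 * (a * b - c) := by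
    nlinarith [hcs, hsq, hYpos]
  have hdle : d ≤ p * q := real_inner_le_norm w₁ w₂
  have hcle : c ≤ a * b := real_inner_le_norm (B w₁) (B w₂)
  have habM : a * b ≤ M ^ 2 * (p * q) := by nlinarith
  have h2 : (p * q - d) * (a * b) ≤ (N ^ 2 * (a * b - c)) * (M ^ 2 * (p * q)) :=
    mul_le_mul key habM (by positivity) (by nlinarith)
  rw [cos_angle, cos_angle, ← hp, ← hq, ← ha, ← hb, ← hc, ← hd,
    one_sub_div (by positivity : p * q ≠ 0), one_sub_div (by positivity : a * b ≠ 0), div_div,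
    div_le_div_iff₀ (by positivity) (by positivity)]
  nlinarith [h2]


/-- Arithmetic step: from `(1 - cos a)/k² ≤ 1 - cos b` deduce `(2/(kπ)) a ≤ b`. -/
lemma angle_step {k a b : ℝ} (hk : 1 ≤ k) (ha0 : 0 ≤ a) (haπ : a ≤ π) (hb0 : 0 ≤ b)
    (hbπ : b ≤ π)
    (H : (1 - Real.cos a) / k ^ 2 ≤ 1 - Real.cos b) : 2 / (k * π) * a ≤ b := by
  have hπ : (0:ℝ) < π := Real.pi_pos
  have hk0 : 0 < k := lt_of_lt_of_le one_pos hk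
  have hsa : Real.sin (a / 2) ^ 2 = 1 / 2 - Real.cos a / 2 := by
    have := Real.sin_sq_eq_half_sub (a / 2)
    rwa [mul_div_cancel₀ a (two_ne_zero)] at this
  have hsb : Real.sin (b / 2) ^ 2 = 1 / 2 - Real.cos b / 2 := by
    have := Real.sin_sq_eq_half_sub (b / 2)
    rwa [mul_div_cancel₀ b (two_ne_zero)] at this
  have hsb0 : 0 ≤ Real.sin (b / 2) :=
    Real.sin_nonneg_of_nonneg_of_le_pi (by linarith) (by linarith)
  have hsa0 : 0 ≤ Real.sin (a / 2) :=
    Real.sin_nonneg_of_nonneg_of_le_pi (by linarith) (by linarith)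
  have hsq : (Real.sin (a / 2) / k) ^ 2 ≤ Real.sin (b / 2) ^ 2 := by
    rw [div_pow]
    rw [div_le_iff₀ (by positivity)] at H ⊢
    nlinarith [hsa, hsb, H]
  have h1 : Real.sin (a / 2) / k ≤ Real.sin (b / 2) := by
    have := Real.sqrt_le_sqrt hsq
    rwa [Real.sqrt_sq (by positivity), Real.sqrt_sq hsb0] at this
  have h2 : Real.sin (b / 2) ≤ b / 2 := Real.sin_le (by linarith)
  have h3 : 2 / π * (a / 2) ≤ Real.sin (a / 2) := Real.mul_le_sin (by linarith) (by linarith)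
  -- combine
  rw [div_mul_eq_mul_div, div_le_iff₀ (by positivity)]
  rw [div_le_iff₀ hk0] at h1
  rw [div_mul_eq_mul_div, div_le_iff₀ hπ] at h3
  nlinarith [mul_le_mul_of_nonneg_right h1 hπ.le,
    mul_le_mul_of_nonneg_right h2 (by positivity : (0:ℝ) ≤ k * π)]

/-- For an invertible linear map `B` of the plane with condition number
`κ(B) = ‖B‖·‖B⁻¹‖`, the angle `ᾱ` between the images of two nonzero vectors is related
to the angle `α` between the vectors by
`(2/(κ(B)π))·α ≤ ᾱ ≤ π·(1 − 2/(κ(B)π)) + (2/(κ(B)π))·α`. -/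
theorem angle_distortion (B : E2 ≃L[ℝ] E2) (w₁ w₂ : E2) (hw₁ : w₁ ≠ 0) (hw₂ : w₂ ≠ 0) :
    (2 / ((‖(B : E2 →L[ℝ] E2)‖ * ‖(B.symm : E2 →L[ℝ] E2)‖) * π)) *
        InnerProductGeometry.angle w₁ w₂ ≤
      InnerProductGeometry.angle (B w₁) (B w₂) ∧
    InnerProductGeometry.angle (B w₁) (B w₂) ≤
      π * (1 - 2 / ((‖(B : E2 →L[ℝ] E2)‖ * ‖(B.symm : E2 →L[ℝ] E2)‖) * π)) +
        (2 / ((‖(B : E2 →L[ℝ] E2)‖ * ‖(B.symm : E2 →L[ℝ] E2)‖) * π)) *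
          InnerProductGeometry.angle w₁ w₂ := by
  set k := ‖(B : E2 →L[ℝ] E2)‖ * ‖(B.symm : E2 →L[ℝ] E2)‖ with hkdef
  have hπ : (0:ℝ) < π := Real.pi_pos
  have hk : 1 ≤ k := by
    set x : E2 := EuclideanSpace.single (0 : Fin 2) (1:ℝ) with hx
    have hx1 : ‖x‖ = 1 := by simp [hx, EuclideanSpace.norm_single]
    have h1 : ‖x‖ ≤ ‖(B.symm : E2 →L[ℝ] E2)‖ * ‖B x‖ := by
      have := (B.symm : E2 →L[ℝ] E2).le_opNorm (B x)
      simpa using this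
    have h2 : ‖B x‖ ≤ ‖(B : E2 →L[ℝ] E2)‖ * ‖x‖ := (B : E2 →L[ℝ] E2).le_opNorm x
    have hN0 : 0 ≤ ‖(B.symm : E2 →L[ℝ] E2)‖ := norm_nonneg _
    rw [hx1] at h1 h2
    nlinarith
  have hlow := angle_step hk (InnerProductGeometry.angle_nonneg w₁ w₂)
    (InnerProductGeometry.angle_le_pi w₁ w₂)
    (InnerProductGeometry.angle_nonneg (B w₁) (B w₂))
    (InnerProductGeometry.angle_le_pi (B w₁) (B w₂))
    (cos_angle_bound B w₁ w₂ hw₁ hw₂)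
  have Hneg := cos_angle_bound B w₁ (-w₂) hw₁ (neg_ne_zero.mpr hw₂)
  rw [map_neg, InnerProductGeometry.angle_neg_right, InnerProductGeometry.angle_neg_right] at Hneg
  have hupp := angle_step hk
    (by linarith [InnerProductGeometry.angle_le_pi w₁ w₂])
    (by linarith [InnerProductGeometry.angle_nonneg w₁ w₂])
    (by linarith [InnerProductGeometry.angle_le_pi (B w₁) (B w₂)])
    (by linarith [InnerProductGeometry.angle_nonneg (B w₁) (B w₂)]) Hneg
  constructor
  · exact hlow
  · have hexp : 2 / (k * π) * (π - InnerProductGeometry.angle w₁ w₂)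
        = 2 / (k * π) * π - 2 / (k * π) * InnerProductGeometry.angle w₁ w₂ := by ring
    rw [hexp] at hupp
    have : π * (1 - 2 / (k * π)) = π - 2 / (k * π) * π := by ring
    rw [this]
    linarith
end
end

section
/- Let C > 0. There exists a constant C' > 0 depending only on C such that every convex element K(a,b,ã,b̃) satisfying conditions (D1) and (D2) with constant C has a ≤ C'·b. -/
noncomputable section

set_option maxHeartbeats 1000000 in
/-- For convex elements `K(a,b,ta,tb)` under conditions (D1) and (D2) with constant `C`,
one has `a ≤ C' * b` for a constant `C'` depending only on `C`. -/
theorem short_side_above (C : ℝ) (hC : 0 < C) :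
    ∃ C' : ℝ, 0 < C' ∧
      ∀ a b ta tb : ℝ, 0 < a → 0 < b → 0 < ta → 0 < tb →
        1 < ta / a + tb / b →
        ta ≤ a → tb ≤ b →
        1 / C ≤ sinAlpha a b ta tb →
        a ≤ C' * b := by
  refine ⟨C, hC, ?_⟩
  intro a b ta tb ha hb hta htb hconv hd1a hd1b hsin
  set x : E2 := pt2 a 0 - pt2 0 b with hxdef
  set y : E2 := pt2 ta tb - pt2 0 b with hydef
  have hangle : sinAlpha a b ta tb = Real.sin (InnerProductGeometry.angle x y) := by
    rw [sinAlpha, EuclideanGeometry.angle, hxdef, hydef]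
    norm_num [vsub_eq_sub]
  have hxx : (inner ℝ x x : ℝ) = a ^ 2 + b ^ 2 := by
    simp [hxdef, pt2, PiLp.inner_apply, Fin.sum_univ_two, EuclideanSpace.norm_sq_eq]
  have hyy : (inner ℝ y y : ℝ) = ta ^ 2 + (tb - b) ^ 2 := by
    simp [hydef, pt2, PiLp.inner_apply, Fin.sum_univ_two, EuclideanSpace.norm_sq_eq]
  have hxy : (inner ℝ x y : ℝ) = a * ta - b * (tb - b) := by
    simp [hxdef, hydef, pt2, PiLp.inner_apply, Fin.sum_univ_two]
    ring
  -- the cross product is positive by convexity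
  have hc : 0 < a * tb - a * b + b * ta := by
    rw [div_add_div _ _ ha.ne' hb.ne', lt_div_iff₀ (by positivity)] at hconv
    nlinarith
  have hkey : Real.sin (InnerProductGeometry.angle x y) * (‖x‖ * ‖y‖)
      = a * tb - a * b + b * ta := by
    rw [InnerProductGeometry.sin_angle_mul_norm_mul_norm, hxx, hyy, hxy]
    have h : (a ^ 2 + b ^ 2) * (ta ^ 2 + (tb - b) ^ 2)
        - (a * ta - b * (tb - b)) * (a * ta - b * (tb - b))
        = (a * tb - a * b + b * ta) ^ 2 := by ring
    rw [h, Real.sqrt_sq hc.le]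
  have hnx2 : ‖x‖ ^ 2 = a ^ 2 + b ^ 2 := by
    rw [← real_inner_self_eq_norm_sq, hxx]
  have hny2 : ‖y‖ ^ 2 = ta ^ 2 + (tb - b) ^ 2 := by
    rw [← real_inner_self_eq_norm_sq, hyy]
  have hnx : a ≤ ‖x‖ := by nlinarith [norm_nonneg x]
  have hny : ta ≤ ‖y‖ := by nlinarith [norm_nonneg y]
  have hCinv : 0 < 1 / C := by positivity
  rw [hangle] at hsin
  have h1 : 1 / C * (a * ta) ≤ 1 / C * (‖x‖ * ‖y‖) := by
    apply mul_le_mul_of_nonneg_left _ hCinv.le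
    exact mul_le_mul hnx hny hta.le (le_trans ha.le hnx)
  have h2 : 1 / C * (‖x‖ * ‖y‖) ≤ a * tb - a * b + b * ta := by
    rw [← hkey]
    exact mul_le_mul_of_nonneg_right hsin (by positivity)
  have h3 : a * tb - a * b + b * ta ≤ b * ta := by nlinarith
  have h4 : 1 / C * (a * ta) ≤ b * ta := le_trans h1 (le_trans h2 h3)
  rw [div_mul_eq_mul_div, one_mul, div_le_iff₀ hC] at h4
  nlinarith
end
end

section
/- For every convex element K(a,b,ã,b̃) satisfying condition (D1) (that is, ã ≤ a and b̃ ≤ b) and every p ≥ 1: I_p(a,b,ã,b̃) ≤ min{ a^{p−1}, b^{p−1} } / ( |l|^{p−1} · sin(α)^{p−1} ). -/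
noncomputable section

open MeasureTheory

/-- The quantity `I_p(a,b,ta,tb)`. -/
def Ip (p a b ta tb : ℝ) : ℝ :=
  ∫ z in (Set.Icc (0:ℝ) 1) ×ˢ (Set.Icc (0:ℝ) 1),
    (1 + z.1 * (tb / b - 1) + z.2 * (ta / a - 1)) ^ (-(p - 1))

lemma angle_eq (a b ta tb : ℝ) :
    EuclideanGeometry.angle (pt2 a 0) (pt2 0 b) (pt2 ta tb) =
      Real.arccos ((a * ta + (-b) * (tb - b)) /
        (Real.sqrt (a^2 + b^2) * Real.sqrt (ta^2 + (tb - b)^2))) := by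
  rw [EuclideanGeometry.angle, InnerProductGeometry.angle]
  have h1 : @inner ℝ _ _ (pt2 a 0 -ᵥ pt2 0 b) (pt2 ta tb -ᵥ pt2 0 b)
      = a * ta + (-b) * (tb - b) := by
    simp [pt2, PiLp.inner_apply, Fin.sum_univ_two]
    ring
  have h2 : ‖pt2 a 0 -ᵥ pt2 0 b‖ = Real.sqrt (a^2 + b^2) := by
    rw [show (pt2 a 0 -ᵥ pt2 0 b : E2) = pt2 a 0 - pt2 0 b from rfl, EuclideanSpace.norm_eq]
    simp [pt2, Fin.sum_univ_two]
  have h3 : ‖pt2 ta tb -ᵥ pt2 0 b‖ = Real.sqrt (ta^2 + (tb - b)^2) := by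
    rw [show (pt2 ta tb -ᵥ pt2 0 b : E2) = pt2 ta tb - pt2 0 b from rfl, EuclideanSpace.norm_eq]
    simp [pt2, Fin.sum_univ_two]
  rw [h1, h2, h3]

lemma lenl_mul_sinAlpha (a b ta tb : ℝ) (ha : 0 < a) (hb : 0 < b) (hta : 0 < ta)
    (htb : 0 < tb) (hconv : 1 < ta / a + tb / b) :
    lenl b ta tb * sinAlpha a b ta tb =
      (a * tb + b * ta - a * b) / Real.sqrt (a^2 + b^2) := by
  set c : ℝ := a * ta + (-b) * (tb - b) with hc
  set N : ℝ := Real.sqrt (a^2 + b^2) with hN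
  set L : ℝ := Real.sqrt (ta^2 + (tb - b)^2) with hL
  have hNpos : 0 < N := Real.sqrt_pos.2 (by positivity)
  have hLsq : L^2 = ta^2 + (tb - b)^2 := Real.sq_sqrt (by positivity)
  have hNsq : N^2 = a^2 + b^2 := Real.sq_sqrt (by positivity)
  have hcross : 0 < a * tb + b * ta - a * b := by
    have h := (div_add_div _ _ (ne_of_gt ha) (ne_of_gt hb)).symm ▸ hconv
    have := (one_lt_div (mul_pos ha hb)).1 h
    nlinarith
  have hLpos : 0 < L := Real.sqrt_pos.2 (by positivity)
  have hlenl : lenl b ta tb = L := by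
    rw [lenl, hL]; ring_nf
  have hcle : |c / (N * L)| ≤ 1 := by
    rw [abs_div, div_le_one (by positivity)]
    rw [abs_mul, abs_of_pos hNpos, abs_of_pos hLpos]
    have h4 : c^2 ≤ (N * L)^2 := by
      rw [mul_pow, hNsq, hLsq, hc]; nlinarith [sq_nonneg (a * (tb - b) + b * ta)]
    calc |c| = Real.sqrt (c^2) := (Real.sqrt_sq_eq_abs c).symm
    _ ≤ Real.sqrt ((N*L)^2) := Real.sqrt_le_sqrt h4
    _ = N * L := Real.sqrt_sq (by positivity)
  have hsin : sinAlpha a b ta tb = Real.sqrt (1 - (c / (N * L))^2) := by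
    rw [sinAlpha, angle_eq, Real.sin_arccos]
  rw [hlenl, hsin]
  rw [show (1 : ℝ) - (c / (N * L))^2 = (N^2 * L^2 - c^2) / (N * L)^2 by
    field_simp]
  have hD : N^2 * L^2 - c^2 = (a * tb + b * ta - a * b)^2 := by
    rw [hLsq, hNsq, hc]; ring
  rw [hD, Real.sqrt_div (sq_nonneg _), Real.sqrt_sq hcross.le,
    Real.sqrt_sq (by positivity : (0:ℝ) ≤ N * L)]
  field_simp

/-- For convex elements `K(a,b,ta,tb)` under condition (D1), for any `p ≥ 1`,
`I_p ≤ min{a^{p-1}, b^{p-1}} / (|l|^{p-1} sin(α)^{p-1})`. -/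
theorem Ip_le_of_D1 :
    ∀ a b ta tb : ℝ, 0 < a → 0 < b → 0 < ta → 0 < tb →
      1 < ta / a + tb / b →
      ta ≤ a → tb ≤ b →
      ∀ p : ℝ, 1 ≤ p →
        Ip p a b ta tb ≤
          min (a ^ (p - 1)) (b ^ (p - 1)) /
            (lenl b ta tb ^ (p - 1) * sinAlpha a b ta tb ^ (p - 1)) := by
  intro a b ta tb ha hb hta htb hconv htaa htbb p hp
  set q : ℝ := p - 1 with hqdef
  have hq : 0 ≤ q := by linarith
  set δ : ℝ := ta / a + tb / b - 1 with hδdef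
  clear_value δ
  have hδ : 0 < δ := by rw [hδdef]; linarith
  have hta1 : ta / a ≤ 1 := (div_le_one ha).2 htaa
  have htb1 : tb / b ≤ 1 := (div_le_one hb).2 htbb
  -- Step A : Ip ≤ δ ^ (-q)
  have stepA : Ip p a b ta tb ≤ δ ^ (-q) := by
    have hmeas : MeasurableSet ((Set.Icc (0:ℝ) 1) ×ˢ (Set.Icc (0:ℝ) 1)) :=
      measurableSet_Icc.prod measurableSet_Icc
    have hvol : (volume ((Set.Icc (0:ℝ) 1) ×ˢ (Set.Icc (0:ℝ) 1))) = 1 := by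
      rw [Measure.volume_eq_prod ℝ ℝ, MeasureTheory.Measure.prod_prod, Real.volume_Icc]
      norm_num
    have hfin : (volume ((Set.Icc (0:ℝ) 1) ×ˢ (Set.Icc (0:ℝ) 1))) < ⊤ := by
      rw [hvol]; exact ENNReal.one_lt_top
    have hbound : ∀ z ∈ (Set.Icc (0:ℝ) 1) ×ˢ (Set.Icc (0:ℝ) 1),
        ‖(1 + z.1 * (tb / b - 1) + z.2 * (ta / a - 1)) ^ (-q)‖ ≤ δ ^ (-q) := by
      rintro ⟨x, y⟩ ⟨⟨hx0, hx1⟩, ⟨hy0, hy1⟩⟩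
      have hu : δ ≤ 1 + x * (tb / b - 1) + y * (ta / a - 1) := by
        rw [hδdef]
        nlinarith [mul_nonneg (by linarith : (0:ℝ) ≤ 1 - x) (by linarith : (0:ℝ) ≤ 1 - tb / b),
          mul_nonneg (by linarith : (0:ℝ) ≤ 1 - y) (by linarith : (0:ℝ) ≤ 1 - ta / a)]
      have hu0 : 0 < 1 + x * (tb / b - 1) + y * (ta / a - 1) := lt_of_lt_of_le hδ hu
      rw [Real.norm_eq_abs, abs_of_nonneg (Real.rpow_nonneg hu0.le _)]
      exact Real.rpow_le_rpow_of_nonpos hδ hu (neg_nonpos.2 hq)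
    calc Ip p a b ta tb ≤ |Ip p a b ta tb| := le_abs_self _
    _ = ‖Ip p a b ta tb‖ := rfl
    _ ≤ δ ^ (-q) * (volume ((Set.Icc (0:ℝ) 1) ×ˢ (Set.Icc (0:ℝ) 1))).toReal :=
        MeasureTheory.norm_setIntegral_le_of_norm_le_const hfin hbound
    _ = δ ^ (-q) := by rw [hvol]; simp
  -- geometry
  have hcross : a * b * δ = a * tb + b * ta - a * b := by
    rw [hδdef]; field_simp; ring
  have hN : (0:ℝ) < Real.sqrt (a^2 + b^2) := Real.sqrt_pos.2 (by positivity)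
  have hLS : lenl b ta tb * sinAlpha a b ta tb = a * b * δ / Real.sqrt (a^2 + b^2) := by
    rw [lenl_mul_sinAlpha a b ta tb ha hb hta htb hconv, hcross]
  have hLSpos : 0 < lenl b ta tb * sinAlpha a b ta tb := by
    rw [hLS]
    have : 0 < a * b * δ := by positivity
    positivity
  have hL0 : 0 < lenl b ta tb := Real.sqrt_pos.2 (by positivity)
  have hS0 : 0 < sinAlpha a b ta tb := by
    by_contra h
    push_neg at h
    nlinarith
  set m : ℝ := min a b with hm
  clear_value m
  have hmpos : 0 < m := by rw [hm]; exact lt_min ha hb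
  have hLSle : lenl b ta tb * sinAlpha a b ta tb ≤ m * δ := by
    rw [hLS, div_le_iff₀ hN]
    have hab : a * b ≤ m * Real.sqrt (a^2 + b^2) := by
      rcases le_total a b with hab | hab
      · rw [hm, min_eq_left hab]
        have : b ≤ Real.sqrt (a^2 + b^2) := (Real.le_sqrt' hb).2 (by nlinarith)
        nlinarith
      · rw [hm, min_eq_right hab]
        have : a ≤ Real.sqrt (a^2 + b^2) := (Real.le_sqrt' ha).2 (by nlinarith)
        nlinarith
    linarith [mul_le_mul_of_nonneg_right hab hδ.le]
  have hminrw : min (a ^ q) (b ^ q) = m ^ q := by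
    rcases le_total a b with hab | hab
    · rw [hm, min_eq_left hab,
        min_eq_left (Real.rpow_le_rpow ha.le hab hq)]
    · rw [hm, min_eq_right hab,
        min_eq_right (Real.rpow_le_rpow hb.le hab hq)]
  -- Step B : δ ^ (-q) ≤ RHS
  have stepB : δ ^ (-q) ≤ m ^ q /
      (lenl b ta tb ^ q * sinAlpha a b ta tb ^ q) := by
    rw [← Real.mul_rpow hL0.le hS0.le, Real.rpow_neg hδ.le, inv_eq_one_div,
      div_le_div_iff₀ (Real.rpow_pos_of_pos hδ q) (Real.rpow_pos_of_pos hLSpos q), one_mul,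
      ← Real.mul_rpow hmpos.le hδ.le]
    exact Real.rpow_le_rpow hLSpos.le hLSle hq
  calc Ip p a b ta tb ≤ δ ^ (-q) := stepA
  _ ≤ m ^ q / (lenl b ta tb ^ q * sinAlpha a b ta tb ^ q) := stepB
  _ = min (a ^ (p - 1)) (b ^ (p - 1)) /
      (lenl b ta tb ^ (p - 1) * sinAlpha a b ta tb ^ (p - 1)) := by rw [hminrw]
end
end

section
/- Let C > 0 and p ≥ 1. There exists a constant C' > 0 depending only on C and p such that for every convex element K(a,b,ã,b̃) satisfying conditions (D1) and (D2) with constant C: max{ a/b^{p−1}, b/a^{p−1} } · I_p(a,b,ã,b̃) ≤ C' · h / |l|^{p−1}. -/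
noncomputable section

open scoped RealInnerProductSpace
open MeasureTheory

/-- The quadrilateral `K(a,b,ta,tb)` with vertices `(0,0), (a,0), (ta,tb), (0,b)`. -/
def quadK (a b ta tb : ℝ) : Set E2 :=
  convexHull ℝ {pt2 0 0, pt2 a 0, pt2 ta tb, pt2 0 b}

/-- Explicit formula for `sinAlpha`. -/
lemma sinAlpha_eq (a b ta tb : ℝ) (ha : 0 < a) (hb : 0 < b) (hta : 0 < ta)
    (hconv : 1 < ta / a + tb / b) :
    sinAlpha a b ta tb = (a * tb + b * ta - a * b) /
      (Real.sqrt (a^2 + b^2) * lenl b ta tb) := by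
  set N := Real.sqrt (a^2 + b^2) with hNdef
  set M := lenl b ta tb with hMdef
  have hN : 0 < N := Real.sqrt_pos.2 (by positivity)
  have hM : 0 < M := Real.sqrt_pos.2 (by positivity)
  have hN2 : N ^ 2 = a^2 + b^2 := Real.sq_sqrt (by positivity)
  have hM2 : M ^ 2 = ta^2 + (b - tb)^2 := Real.sq_sqrt (by positivity)
  have hcross : 0 < a * tb + b * ta - a * b := by
    have h := hconv
    rw [div_add_div _ _ (ne_of_gt ha) (ne_of_gt hb)] at h
    have := (one_lt_div (by positivity)).1 h
    nlinarith
  have hinner : ⟪pt2 a 0 - pt2 0 b, pt2 ta tb - pt2 0 b⟫ = a * ta + (0 - b) * (tb - b) := by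
    simp [pt2, PiLp.inner_apply, Fin.sum_univ_two, RCLike.inner_apply]; ring
  have hnorm1 : ‖pt2 a 0 - pt2 0 b‖ = N := by
    rw [EuclideanSpace.norm_eq]; simp [pt2, Fin.sum_univ_two]; rw [hNdef]
  have hnorm2 : ‖pt2 ta tb - pt2 0 b‖ = M := by
    rw [EuclideanSpace.norm_eq, hMdef, lenl]
    simp [pt2, Fin.sum_univ_two]
    ring_nf
  have hform : sinAlpha a b ta tb =
      Real.sqrt (1 - ((a * ta + (0 - b) * (tb - b)) / (N * M)) ^ 2) := by
    rw [sinAlpha, EuclideanGeometry.angle, InnerProductGeometry.angle, Real.sin_arccos]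
    simp only [vsub_eq_sub]
    rw [hinner, hnorm1, hnorm2]
  rw [hform]
  have key : 1 - ((a * ta + (0 - b) * (tb - b)) / (N * M)) ^ 2 =
      ((a * tb + b * ta - a * b) / (N * M)) ^ 2 := by
    have hNM : (N * M) ^ 2 = (a^2 + b^2) * (ta^2 + (b - tb)^2) := by
      rw [mul_pow, hN2, hM2]
    field_simp
    nlinarith [hNM]
  rw [key, Real.sqrt_sq (by positivity)]

/-- The integrand of `I_p` is bounded by the value at the corner `(1,1)`. -/
lemma Ip_le (c1 c2 s q : ℝ) (hq : 0 ≤ q) (hc1 : c1 ≤ 0) (hc2 : c2 ≤ 0)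
    (hs : s = 1 + c1 + c2) (hspos : 0 < s) :
    (∫ z in (Set.Icc (0:ℝ) 1) ×ˢ (Set.Icc (0:ℝ) 1),
      (1 + z.1 * c1 + z.2 * c2) ^ (-q)) ≤ s ^ (-q) := by
  have hvol : (volume ((Set.Icc (0:ℝ) 1) ×ˢ (Set.Icc (0:ℝ) 1))).toReal = 1 := by
    rw [MeasureTheory.Measure.volume_eq_prod, MeasureTheory.Measure.prod_prod]
    simp
  have hvolfin : volume ((Set.Icc (0:ℝ) 1) ×ˢ (Set.Icc (0:ℝ) 1)) < ⊤ := by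
    rw [MeasureTheory.Measure.volume_eq_prod, MeasureTheory.Measure.prod_prod]
    simp
  have hbound : ∀ z : ℝ × ℝ, z ∈ (Set.Icc (0:ℝ) 1) ×ˢ (Set.Icc (0:ℝ) 1) →
      ‖(1 + z.1 * c1 + z.2 * c2) ^ (-q)‖ ≤ s ^ (-q) := by
    rintro ⟨x, y⟩ ⟨⟨hx0, hx1⟩, ⟨hy0, hy1⟩⟩
    have hbase : s ≤ 1 + x * c1 + y * c2 := by nlinarith
    rw [Real.norm_eq_abs, abs_of_nonneg (Real.rpow_nonneg (by linarith) _)]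
    exact Real.rpow_le_rpow_of_nonpos hspos hbase (neg_nonpos.2 hq)
  calc (∫ z in (Set.Icc (0:ℝ) 1) ×ˢ (Set.Icc (0:ℝ) 1),
          (1 + z.1 * c1 + z.2 * c2) ^ (-q))
      ≤ ‖∫ z in (Set.Icc (0:ℝ) 1) ×ˢ (Set.Icc (0:ℝ) 1),
          (1 + z.1 * c1 + z.2 * c2) ^ (-q)‖ := le_abs_self _
    _ ≤ s ^ (-q) * (volume ((Set.Icc (0:ℝ) 1) ×ˢ (Set.Icc (0:ℝ) 1))).toReal :=
        norm_setIntegral_le_of_norm_le_const_ae' hvolfin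
          (Filter.Eventually.of_forall hbound)
    _ = s ^ (-q) := by rw [hvol, mul_one]

/-- The diagonal `V2V4` is at most the diameter. -/
lemma sqrt_le_diam (a b ta tb : ℝ) :
    Real.sqrt (a^2 + b^2) ≤ Metric.diam (quadK a b ta tb) := by
  have hmem1 : pt2 a 0 ∈ quadK a b ta tb :=
    subset_convexHull ℝ _ (by simp [Set.mem_insert_iff])
  have hmem2 : pt2 0 b ∈ quadK a b ta tb :=
    subset_convexHull ℝ _ (by simp [Set.mem_insert_iff])
  have hbd : Bornology.IsBounded (quadK a b ta tb) := by
    rw [quadK, isBounded_convexHull]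
    exact (Set.toFinite _).isBounded
  have hdist : dist (pt2 a 0) (pt2 0 b) = Real.sqrt (a^2 + b^2) := by
    rw [EuclideanSpace.dist_eq]
    simp [pt2, Fin.sum_univ_two, Real.dist_eq]
  rw [← hdist]
  exact Metric.dist_le_diam_of_mem hbd hmem1 hmem2

/-- For any `p ≥ 1` and convex elements `K(a,b,ta,tb)` under conditions (D1) and (D2)
with constant `C`: `max{a/b^{p-1}, b/a^{p-1}} · I_p ≤ C' · h / |l|^{p-1}`. -/
theorem Ip_bound_of_D1_D2 (C p : ℝ) (hC : 0 < C) (hp1 : 1 ≤ p) :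
    ∃ C' : ℝ, 0 < C' ∧
      ∀ a b ta tb : ℝ, 0 < a → 0 < b → 0 < ta → 0 < tb →
        1 < ta / a + tb / b →
        ta ≤ a → tb ≤ b →
        1 / C ≤ sinAlpha a b ta tb →
        max (a / b ^ (p - 1)) (b / a ^ (p - 1)) * Ip p a b ta tb ≤
          C' * (Metric.diam (quadK a b ta tb) / lenl b ta tb ^ (p - 1)) := by
  set q := p - 1 with hqdef
  have hq : 0 ≤ q := by simp [hqdef]; linarith
  refine ⟨C ^ q, Real.rpow_pos_of_pos hC q, ?_⟩
  intro a b ta tb ha hb hta htb hconv hD1a hD1b hD2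
  set N := Real.sqrt (a^2 + b^2) with hNdef
  set M := lenl b ta tb with hMdef
  have hN : 0 < N := Real.sqrt_pos.2 (by positivity)
  have hM : 0 < M := Real.sqrt_pos.2 (by positivity)
  have hN2 : N ^ 2 = a ^ 2 + b ^ 2 := Real.sq_sqrt (by positivity)
  have haN : a ≤ N := by nlinarith
  have hbN : b ≤ N := by nlinarith
  -- the quantity s
  set s := ta / a + tb / b - 1 with hsdef
  have hspos : 0 < s := by simp [hsdef]; linarith
  -- lower bound on s from (D2)
  have hsin : sinAlpha a b ta tb = (a * tb + b * ta - a * b) / (N * M) :=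
    sinAlpha_eq a b ta tb ha hb hta hconv
  have hcrosseq : a * tb + b * ta - a * b = a * b * s := by
    rw [hsdef]; field_simp; ring
  have hslow : N * M / (C * a * b) ≤ s := by
    have hD2' : 1 / C ≤ a * b * s / (N * M) := by rw [hsin, hcrosseq] at hD2; exact hD2
    have h := (div_le_div_iff₀ hC (by positivity)).1 hD2'
    rw [div_le_iff₀ (by positivity)]
    nlinarith [h]
  have hslb : 0 < N * M / (C * a * b) := by positivity
  -- bound on Ip
  have hIp1 : Ip p a b ta tb ≤ s ^ (-q) := by
    rw [Ip]
    exact Ip_le (tb / b - 1) (ta / a - 1) s q hq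
      (by rw [sub_nonpos]; exact div_le_one_of_le₀ hD1b hb.le)
      (by rw [sub_nonpos]; exact div_le_one_of_le₀ hD1a ha.le)
      (by rw [hsdef]; ring) hspos
  have hIp2 : s ^ (-q) ≤ (C * a * b / (N * M)) ^ q := by
    have h1 : s ^ (-q) ≤ (N * M / (C * a * b)) ^ (-q) :=
      Real.rpow_le_rpow_of_nonpos hslb hslow (neg_nonpos.2 hq)
    have h2 : (N * M / (C * a * b)) ^ (-q) = (C * a * b / (N * M)) ^ q := by
      rw [Real.rpow_neg hslb.le, ← Real.inv_rpow hslb.le, inv_div]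
    rw [← h2]; exact h1
  -- positivity facts
  have hNq : (0:ℝ) < N ^ q := Real.rpow_pos_of_pos hN q
  have hMq : (0:ℝ) < M ^ q := Real.rpow_pos_of_pos hM q
  have haq : (0:ℝ) < a ^ q := Real.rpow_pos_of_pos ha q
  have hbq : (0:ℝ) < b ^ q := Real.rpow_pos_of_pos hb q
  have hCq : (0:ℝ) < C ^ q := Real.rpow_pos_of_pos hC q
  have e1 : (C * a * b / (N * M)) ^ q = C ^ q * a ^ q * b ^ q / (N ^ q * M ^ q) := by
    rw [Real.div_rpow (by positivity) (by positivity),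
      Real.mul_rpow (by positivity) (by positivity),
      Real.mul_rpow (by positivity) (by positivity),
      Real.mul_rpow (by positivity) (by positivity)]
  have hmaxkey : max (a / b ^ q) (b / a ^ q) * (C * a * b / (N * M)) ^ q ≤
      C ^ q * (N / M ^ q) := by
    rw [e1, max_mul_of_nonneg _ _ (by positivity : (0:ℝ) ≤ C ^ q * a ^ q * b ^ q / (N ^ q * M ^ q))]
    have hbranch : ∀ x y : ℝ, 0 < x → 0 < y → x ≤ N → 0 < x ^ q → 0 < y ^ q →
        x ^ q ≤ N ^ q →
        x / y ^ q * (C ^ q * x ^ q * y ^ q / (N ^ q * M ^ q)) ≤ C ^ q * (N / M ^ q) := by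
      intro x y hx hy hxN hxq hyq hxqN
      have heq : x / y ^ q * (C ^ q * x ^ q * y ^ q / (N ^ q * M ^ q)) =
          C ^ q * (x * x ^ q / (N ^ q * M ^ q)) := by
        field_simp
      rw [heq]
      have h2 : x * x ^ q ≤ N * N ^ q := by
        apply mul_le_mul hxN hxqN hxq.le hN.le
      calc C ^ q * (x * x ^ q / (N ^ q * M ^ q))
          ≤ C ^ q * (N * N ^ q / (N ^ q * M ^ q)) := by
            gcongr
        _ = C ^ q * (N / M ^ q) := by
            have hne : (N:ℝ) ^ q ≠ 0 := ne_of_gt hNq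
            have hne2 : (M:ℝ) ^ q ≠ 0 := ne_of_gt hMq
            field_simp
    apply max_le
    · have := hbranch a b ha hb haN haq hbq (Real.rpow_le_rpow ha.le haN hq)
      linarith [this]
    · have e2 : C ^ q * a ^ q * b ^ q = C ^ q * b ^ q * a ^ q := by ring
      rw [e2]
      exact hbranch b a hb ha hbN hbq haq (Real.rpow_le_rpow hb.le hbN hq)
  have hmax0 : 0 ≤ max (a / b ^ q) (b / a ^ q) :=
    le_trans (by positivity) (le_max_left (a / b ^ q) (b / a ^ q))
  have hdiam : N ≤ Metric.diam (quadK a b ta tb) := sqrt_le_diam a b ta tb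
  calc max (a / b ^ q) (b / a ^ q) * Ip p a b ta tb
      ≤ max (a / b ^ q) (b / a ^ q) * (C * a * b / (N * M)) ^ q :=
        mul_le_mul_of_nonneg_left (hIp1.trans hIp2) hmax0
    _ ≤ C ^ q * (N / M ^ q) := hmaxkey
    _ ≤ C ^ q * (Metric.diam (quadK a b ta tb) / M ^ q) := by
        gcongr
end
end

section
/- Let k ≥ 0 be an integer and C > 0. There exists a constant C' > 0 depending only on k and C such that for every convex element K(a,b,ã,b̃) satisfying condition (Δ1) with constant C, every p ≥ 1, and every real polynomial q in two variables of total degree ≤ k: ( ∫_{K(a,b,ã,b̃)} |q|^p )^{1/p} ≤ C' · ( ∫_{T(a,b)} |q|^p )^{1/p}, where T(a,b) ⊆ K(a,b,ã,b̃) is the triangle with vertices (0,0), (a,0), (0,b). -/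
noncomputable section

/-- The triangle `T(a,b)` with vertices `(0,0), (a,0), (0,b)`. -/
def triT (a b : ℝ) : Set E2 := convexHull ℝ {pt2 0 0, pt2 a 0, pt2 0 b}

/-- A two-variable polynomial as a function on the plane. -/
def evalPoly (q : MvPolynomial (Fin 2) ℝ) (X : E2) : ℝ :=
  MvPolynomial.eval (fun t => X t) q

open MeasureTheory MvPolynomial Set
lemma continuous_evalPoly (q : MvPolynomial (Fin 2) ℝ) : Continuous (evalPoly q) := by
  have h1 : Continuous fun X : E2 => (fun t => X t : Fin 2 → ℝ) :=
    continuous_pi fun t => (EuclideanSpace.proj t).continuous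
  exact (MvPolynomial.continuous_eval q).comp h1

lemma evalPoly_add (q r : MvPolynomial (Fin 2) ℝ) (X : E2) :
    evalPoly (q + r) X = evalPoly q X + evalPoly r X := by simp [evalPoly]

lemma evalPoly_smul (c : ℝ) (q : MvPolynomial (Fin 2) ℝ) (X : E2) :
    evalPoly (c • q) X = c * evalPoly q X := by simp [evalPoly, MvPolynomial.smul_eval]

lemma evalPoly_neg (q : MvPolynomial (Fin 2) ℝ) (X : E2) :
    evalPoly (-q) X = - evalPoly q X := by simp [evalPoly]

/-- Analyticity of polynomial evaluation on the plane. -/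
lemma analyticOnNhd_evalPoly (q : MvPolynomial (Fin 2) ℝ) :
    AnalyticOnNhd ℝ (evalPoly q) Set.univ := by
  have := AnalyticOnNhd.eval_linearMap
    ((WithLp.linearEquiv 2 ℝ (Fin 2 → ℝ)).toLinearMap) q
  exact this
/-- Scaled polynomial: coefficientwise multiplication by `∏ c i ^ d i`. -/
def scalePoly (c : Fin 2 → ℝ) (q : MvPolynomial (Fin 2) ℝ) : MvPolynomial (Fin 2) ℝ :=
  ∑ d ∈ q.support, monomial d (q.coeff d * ∏ i, c i ^ d i)

lemma totalDegree_scalePoly_le (c : Fin 2 → ℝ) (q : MvPolynomial (Fin 2) ℝ) :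
    (scalePoly c q).totalDegree ≤ q.totalDegree := by
  refine (totalDegree_finset_sum _ _).trans (Finset.sup_le fun d hd => ?_)
  exact (totalDegree_monomial_le _ _).trans (le_totalDegree hd)

lemma evalPoly_scalePoly (c : Fin 2 → ℝ) (q : MvPolynomial (Fin 2) ℝ) (X : E2) :
    evalPoly (scalePoly c q) X = eval (fun i => c i * X i) q := by
  unfold evalPoly scalePoly
  rw [map_sum, eval_eq' (fun i => c i * X i) q]
  refine Finset.sum_congr rfl fun d hd => ?_
  rw [eval_monomial]
  simp only [Finsupp.prod_fintype _ _ (fun i => pow_zero _)]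
  rw [mul_assoc, ← Finset.prod_mul_distrib]
  simp [mul_pow]
lemma isCompact_triT (a b : ℝ) : IsCompact (triT a b) := by
  apply Set.Finite.isCompact_convexHull
  exact (Set.finite_singleton _).insert _ |>.insert _

lemma isCompact_quadK (a b ta tb : ℝ) : IsCompact (quadK a b ta tb) := by
  apply Set.Finite.isCompact_convexHull
  exact ((Set.finite_singleton _).insert _ |>.insert _).insert _

lemma pt2_zero : pt2 0 0 = 0 := by
  ext i; fin_cases i <;> simp [pt2]

lemma norm_pt2_le (x y c : ℝ) (hx : |x| ≤ c) (hy : |y| ≤ c) : ‖pt2 x y‖ ≤ 2 * c := by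
  have hc : 0 ≤ c := le_trans (abs_nonneg x) hx
  rw [EuclideanSpace.norm_eq]
  have : ∑ i, ‖pt2 x y i‖ ^ 2 = x ^ 2 + y ^ 2 := by
    simp [Fin.sum_univ_two, pt2, Real.norm_eq_abs, sq_abs]
  rw [this]
  have hx2 : |x| ^ 2 ≤ c ^ 2 := pow_le_pow_left₀ (abs_nonneg x) hx 2
  have hy2 : |y| ^ 2 ≤ c ^ 2 := pow_le_pow_left₀ (abs_nonneg y) hy 2
  have h1 : x ^ 2 + y ^ 2 ≤ (2 * c) ^ 2 := by
    rw [← sq_abs x, ← sq_abs y]; nlinarith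
  calc Real.sqrt (x ^ 2 + y ^ 2) ≤ Real.sqrt ((2 * c) ^ 2) := Real.sqrt_le_sqrt h1
  _ = 2 * c := by rw [Real.sqrt_sq (by linarith)]

/-- The open triangle is inside `triT 1 1`. -/
lemma openTri_subset_triT : {x : E2 | 0 < x 0 ∧ 0 < x 1 ∧ x 0 + x 1 < 1} ⊆ triT 1 1 := by
  rintro x ⟨h0, h1, hs⟩
  have hps : (0:ℝ) < x 0 + x 1 := by linarith
  set s : ℝ := x 0 + x 1
  set m : E2 := (x 0 / s) • pt2 1 0 + (x 1 / s) • pt2 0 1 with hm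
  have hmem2 : pt2 1 0 ∈ triT 1 1 := subset_convexHull ℝ _ (by simp)
  have hmem3 : pt2 0 1 ∈ triT 1 1 := subset_convexHull ℝ _ (by simp)
  have hmem1 : pt2 0 0 ∈ triT 1 1 := subset_convexHull ℝ _ (by simp)
  have hmMem : m ∈ triT 1 1 := by
    refine (convex_convexHull ℝ _) hmem2 hmem3 (by positivity) (by positivity) ?_
    field_simp
    rfl
  have hx : x = (1 - s) • pt2 0 0 + s • m := by
    ext i
    fin_cases i <;>
    · simp [hm, PiLp.add_apply, PiLp.smul_apply, pt2]
      field_simp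
  rw [hx]
  exact (convex_convexHull ℝ _) hmem1 hmMem (by linarith) (by linarith) (by ring)

lemma openTri_isOpen : IsOpen {x : E2 | 0 < x 0 ∧ 0 < x 1 ∧ x 0 + x 1 < 1} := by
  have c0 : Continuous fun x : E2 => x 0 := (EuclideanSpace.proj (0:Fin 2)).continuous
  have c1 : Continuous fun x : E2 => x 1 := (EuclideanSpace.proj (1:Fin 2)).continuous
  exact (isOpen_lt continuous_const c0).inter
    ((isOpen_lt continuous_const c1).inter (isOpen_lt (c0.add c1) continuous_const))

lemma openTri_nonempty : ({x : E2 | 0 < x 0 ∧ 0 < x 1 ∧ x 0 + x 1 < 1}).Nonempty := by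
  refine ⟨pt2 (1/4) (1/4), ?_⟩
  constructor
  · norm_num [pt2]
  constructor
  · norm_num [pt2]
  · norm_num [pt2]
lemma integrableOn_abs_triT (q : MvPolynomial (Fin 2) ℝ) :
    IntegrableOn (fun x => |evalPoly q x|) (triT 1 1) volume :=
  ((continuous_evalPoly q).abs).continuousOn.integrableOn_compact (isCompact_triT 1 1)

lemma poly_eq_zero_of_integral_abs_eq_zero (q : MvPolynomial (Fin 2) ℝ)
    (h : ∫ Y in triT 1 1, |evalPoly q Y| = 0) : q = 0 := by
  set f := evalPoly q with hf
  set Ω := {x : E2 | 0 < x 0 ∧ 0 < x 1 ∧ x 0 + x 1 < 1} with hΩ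
  have hae : (fun x => |f x|) =ᵐ[volume.restrict (triT 1 1)] 0 :=
    (setIntegral_eq_zero_iff_of_nonneg_ae (Filter.Eventually.of_forall fun x => abs_nonneg _)
      (integrableOn_abs_triT q)).mp h
  have hopen : IsOpen {x : E2 | f x ≠ 0} :=
    isOpen_ne.preimage (continuous_evalPoly q)
  have hzero : ∀ x ∈ Ω, f x = 0 := by
    by_contra hcon
    push_neg at hcon
    obtain ⟨x, hxΩ, hxne⟩ := hcon
    have hVopen : IsOpen (Ω ∩ {x : E2 | f x ≠ 0}) := openTri_isOpen.inter hopen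
    have hVpos : 0 < volume (Ω ∩ {x : E2 | f x ≠ 0}) :=
      hVopen.measure_pos volume ⟨x, hxΩ, hxne⟩
    have hmeas0 : volume ({x : E2 | ¬ |f x| = 0} ∩ triT 1 1) = 0 := by
      have := hae
      rw [Filter.EventuallyEq, ae_iff, Measure.restrict_apply] at this
      · simpa using this
      · exact (isOpen_ne.preimage ((continuous_evalPoly q).abs)).measurableSet
    have hsub : Ω ∩ {x : E2 | f x ≠ 0} ⊆ {x : E2 | ¬ |f x| = 0} ∩ triT 1 1 := by
      rintro y ⟨hyΩ, hyne⟩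
      exact ⟨by simpa [abs_eq_zero] using hyne, openTri_subset_triT hyΩ⟩
    exact absurd (measure_mono_null hsub hmeas0) (ne_of_gt hVpos)
  obtain ⟨z₀, hz₀⟩ := openTri_nonempty
  have hev : f =ᶠ[nhds z₀] 0 :=
    Filter.eventuallyEq_of_mem (openTri_isOpen.mem_nhds hz₀) hzero
  have hEq : Set.EqOn f 0 Set.univ :=
    (analyticOnNhd_evalPoly q).eqOn_zero_of_preconnected_of_eventuallyEq_zero
      isPreconnected_univ (Set.mem_univ z₀) hev
  apply MvPolynomial.funext
  intro x
  have := hEq (Set.mem_univ (WithLp.toLp 2 x : E2))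
  simpa [hf, evalPoly] using this
/-- Key finite-dimensional bound: sup on a ball is controlled by `L¹(T(1,1))`,
uniformly on polynomials of total degree at most `k`. -/
lemma key_bound (k : ℕ) (R : ℝ) :
    ∃ M : ℝ, 0 < M ∧ ∀ q : MvPolynomial (Fin 2) ℝ, q.totalDegree ≤ k →
      ∀ X ∈ Metric.closedBall (0:E2) R,
        |evalPoly q X| ≤ M * ∫ Y in triT 1 1, |evalPoly q Y| := by
  set P := MvPolynomial.restrictTotalDegree (Fin 2) ℝ k with hP
  set S : Set E2 := Metric.closedBall 0 R with hS
  haveI hScs : CompactSpace S := isCompact_iff_compactSpace.mp (isCompact_closedBall _ _)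
  let n : AddGroupNorm ↥P :=
  { toFun := fun q => ∫ Y in triT 1 1, |evalPoly q.1 Y|
    map_zero' := by simp [evalPoly]
    add_le' := by
      intro q r
      have h1 : ∀ Y : E2, |evalPoly (q.1 + r.1) Y| ≤ |evalPoly q.1 Y| + |evalPoly r.1 Y| := by
        intro Y; rw [evalPoly_add]; exact abs_add_le _ _
      calc ∫ Y in triT 1 1, |evalPoly (↑q + ↑r) Y|
          ≤ ∫ Y in triT 1 1, (|evalPoly q.1 Y| + |evalPoly r.1 Y|) := by
            refine setIntegral_mono (integrableOn_abs_triT _)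
              ((integrableOn_abs_triT _).add (integrableOn_abs_triT _)) h1
        _ = (∫ Y in triT 1 1, |evalPoly q.1 Y|) + ∫ Y in triT 1 1, |evalPoly r.1 Y| :=
            integral_add (integrableOn_abs_triT _) (integrableOn_abs_triT _)
    neg' := by intro q; simp [evalPoly_neg]
    eq_zero_of_map_eq_zero' := by
      intro q hq
      exact Subtype.ext (poly_eq_zero_of_integral_abs_eq_zero q.1 hq) }
  letI : NormedAddCommGroup ↥P := n.toNormedAddCommGroup
  letI : NormedSpace ℝ ↥P :=
  { norm_smul_le := by
      intro c q
      have : ‖c • q‖ = ∫ Y in triT 1 1, |c * evalPoly q.1 Y| := by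
        show (∫ Y in triT 1 1, |evalPoly (c • q.1) Y|) = _
        congr 1; funext Y; rw [evalPoly_smul]
      rw [this]
      simp only [abs_mul]
      rw [integral_const_mul]
      exact le_of_eq rfl }
  let Φ : ↥P →ₗ[ℝ] C(S, ℝ) :=
  { toFun := fun q => ⟨fun x => evalPoly q.1 x.1,
      (continuous_evalPoly q.1).comp continuous_subtype_val⟩
    map_add' := by intro q r; ext x; exact evalPoly_add _ _ _
    map_smul' := by intro c q; ext x; exact evalPoly_smul _ _ _ }
  have hbs : IsBoundedSMul ℝ ↥P := inferInstance
  have hcs := @IsBoundedSMul.continuousSMul ℝ ↥P _ _ _ _ _ hbs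
  obtain ⟨M, hM, hb⟩ := SemilinearMapClass.bound_of_continuous Φ
    (@LinearMap.continuous_of_finiteDimensional _ _ _ _ _ (PseudoMetricSpace.toUniformSpace.toTopologicalSpace) _ hcs _ _ _ _ _ _ _ _ _ Φ)
  refine ⟨M, hM, ?_⟩
  intro q hq X hX
  set qq : ↥P := ⟨q, (MvPolynomial.mem_restrictTotalDegree _ _ _).mpr hq⟩ with hqq
  calc |evalPoly q X| = ‖(Φ qq) ⟨X, hX⟩‖ := by simp [Φ]; rfl
    _ ≤ ‖Φ qq‖ := (Φ qq).norm_coe_le_norm _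
    _ ≤ M * ‖qq‖ := hb qq
    _ = M * ∫ Y in triT 1 1, |evalPoly q Y| := rfl
lemma rpow_one_div_le_max {V p : ℝ} (hV : 0 ≤ V) (hp : 1 ≤ p) :
    V ^ (1 / p) ≤ max 1 V := by
  have hp0 : 0 < p := lt_of_lt_of_le one_pos hp
  have h1p : 0 < 1 / p := by positivity
  rcases le_total V 1 with h | h
  · calc V ^ (1/p) ≤ 1 ^ (1/p) := Real.rpow_le_rpow hV h (le_of_lt h1p)
      _ = 1 := Real.one_rpow _
      _ ≤ max 1 V := le_max_left _ _
  · have h1 : V ^ (1/p) ≤ V ^ (1:ℝ) :=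
      Real.rpow_le_rpow_of_exponent_le h (by rw [div_le_one hp0]; linarith)
    rw [Real.rpow_one] at h1
    exact h1.trans (le_max_right _ _)

/-- `L¹(T(1,1))` is controlled by `L^p(T(1,1))`, uniformly in `p ≥ 1`. -/
lemma L1_le_Lp (q : MvPolynomial (Fin 2) ℝ) {p : ℝ} (hp : 1 ≤ p) :
    (∫ Y in triT 1 1, |evalPoly q Y|) ≤
      ((volume (triT 1 1)).toReal + 1) * (∫ Y in triT 1 1, |evalPoly q Y| ^ p) ^ (1 / p) := by
  have hp0 : 0 < p := lt_of_lt_of_le one_pos hp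
  set T := triT 1 1 with hT
  set f := evalPoly q with hf
  have hfc : Continuous f := continuous_evalPoly q
  have hfpC : Continuous fun x => |f x| ^ p :=
    Continuous.rpow_const hfc.abs (fun x => Or.inr (le_of_lt hp0))
  have hintp : IntegrableOn (fun x => |f x| ^ p) T volume :=
    hfpC.continuousOn.integrableOn_compact (isCompact_triT 1 1)
  have hint1 : IntegrableOn (fun x => |f x|) T volume := integrableOn_abs_triT q
  set Ipp := ∫ Y in T, |f Y| ^ p with hIpp
  have hIppnn : 0 ≤ Ipp := integral_nonneg fun x => Real.rpow_nonneg (abs_nonneg _) _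
  have hμT : volume T ≠ ⊤ := (isCompact_triT 1 1).measure_lt_top.ne
  rcases eq_or_lt_of_le hIppnn with h0 | hpos
  · -- Ipp = 0
    have hz : (fun x => |f x| ^ p) =ᵐ[volume.restrict T] 0 :=
      (setIntegral_eq_zero_iff_of_nonneg_ae
        (Filter.Eventually.of_forall fun x => Real.rpow_nonneg (abs_nonneg _) _) hintp).mp h0.symm
    have hz1 : (fun x => |f x|) =ᵐ[volume.restrict T] 0 := by
      filter_upwards [hz] with x hx
      have : |f x| ^ p = 0 := hx
      simpa using (Real.rpow_eq_zero (abs_nonneg _) (ne_of_gt hp0)).mp this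
    have : (∫ Y in T, |f Y|) = 0 := integral_eq_zero_of_ae hz1
    rw [this, ← h0, Real.zero_rpow (by positivity), mul_zero]
  · set lam := Ipp ^ (1 / p) with hlam
    have hlampos : 0 < lam := Real.rpow_pos_of_pos hpos _
    have hlamp : lam ^ p = Ipp := by
      rw [hlam, ← Real.rpow_mul hIppnn, one_div_mul_cancel (ne_of_gt hp0), Real.rpow_one]
    have hpw : ∀ x, |f x| / lam ≤ 1 + (|f x| / lam) ^ p := by
      intro x
      set r := |f x| / lam with hr
      have hrnn : 0 ≤ r := div_nonneg (abs_nonneg _) (le_of_lt hlampos)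
      rcases le_total r 1 with h | h
      · have : (0:ℝ) ≤ r ^ p := Real.rpow_nonneg hrnn _
        linarith
      · calc r = r ^ (1:ℝ) := (Real.rpow_one r).symm
          _ ≤ r ^ p := Real.rpow_le_rpow_of_exponent_le h hp
          _ ≤ 1 + r ^ p := by linarith
    have hintg : IntegrableOn (fun x => (|f x| / lam) ^ p) T volume := by
      have : Continuous fun x => (|f x| / lam) ^ p :=
        Continuous.rpow_const (hfc.abs.div_const lam) (fun x => Or.inr (le_of_lt hp0))
      exact this.continuousOn.integrableOn_compact (isCompact_triT 1 1)
    have hintc : IntegrableOn (fun _ : E2 => (1:ℝ)) T volume :=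
      (integrableOn_const_iff).mpr (Or.inr (isCompact_triT 1 1).measure_lt_top)
    have hint2 : IntegrableOn (fun x => 1 + (|f x| / lam) ^ p) T volume := hintc.add hintg
    have hmono : ∫ Y in T, |f Y| / lam ≤ ∫ Y in T, (1 + (|f Y| / lam) ^ p) :=
      setIntegral_mono (hint1.div_const lam) hint2 hpw
    have hlhs : ∫ Y in T, |f Y| / lam = (∫ Y in T, |f Y|) / lam := integral_div lam _
    have hrhs : ∫ Y in T, (1 + (|f Y| / lam) ^ p) = (volume T).toReal + 1 := by
      rw [integral_add hintc hintg]
      have h2 : ∫ Y in T, (|f Y| / lam) ^ p = 1 := by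
        have : ∀ x : E2, (|f x| / lam) ^ p = |f x| ^ p / lam ^ p := fun x =>
          Real.div_rpow (abs_nonneg _) (le_of_lt hlampos) _
        rw [integral_congr_ae (Filter.Eventually.of_forall fun x => this x), integral_div,
          hlamp, div_self (ne_of_gt hpos)]
      rw [h2, setIntegral_const]
      simp
      rfl
    rw [hlhs, hrhs] at hmono
    rw [div_le_iff₀ hlampos] at hmono
    exact hmono
lemma reduced (k : ℕ) (C : ℝ) (hC : 0 < C) :
    ∃ C'' : ℝ, 0 < C'' ∧ ∀ al be : ℝ, 0 < al → 0 < be → al ≤ C → be ≤ C →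
      ∀ p : ℝ, 1 ≤ p → ∀ q : MvPolynomial (Fin 2) ℝ, q.totalDegree ≤ k →
        (∫ X in quadK 1 1 al be, |evalPoly q X| ^ p) ^ (1/p) ≤
          C'' * (∫ X in triT 1 1, |evalPoly q X| ^ p) ^ (1/p) := by
  set R : ℝ := 2 * max 1 C with hR
  obtain ⟨M, hM, hkey⟩ := key_bound k R
  set V : ℝ := (volume (Metric.closedBall (0:E2) R)).toReal with hV
  have hVnn : 0 ≤ V := ENNReal.toReal_nonneg
  set mT : ℝ := (volume (triT 1 1)).toReal with hmT
  have hmTnn : 0 ≤ mT := ENNReal.toReal_nonneg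
  refine ⟨max 1 V * (M * (mT + 1)), by positivity, ?_⟩
  intro al be hal hbe halC hbeC p hp q hq
  have hp0 : 0 < p := lt_of_lt_of_le one_pos hp
  set f := evalPoly q with hf
  set K := quadK 1 1 al be with hK
  -- K is inside the closed ball of radius R
  have hsubK : K ⊆ Metric.closedBall (0:E2) R := by
    rw [hK]
    apply convexHull_min _ (convex_closedBall _ _)
    have hmem : ∀ x y : ℝ, |x| ≤ max 1 C → |y| ≤ max 1 C →
        pt2 x y ∈ Metric.closedBall (0:E2) R := by
      intro x y hx hy
      rw [mem_closedBall_zero_iff]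
      exact norm_pt2_le x y _ hx hy
    have h1C : (0:ℝ) ≤ max 1 C := le_trans zero_le_one (le_max_left _ _)
    rintro z (rfl | rfl | rfl | rfl)
    · exact hmem 0 0 (by simpa using h1C) (by simpa using h1C)
    · exact hmem 1 0 (by rw [abs_one]; exact le_max_left _ _) (by simpa using h1C)
    · exact hmem al be (by rw [abs_of_pos hal]; exact le_trans halC (le_max_right _ _))
        (by rw [abs_of_pos hbe]; exact le_trans hbeC (le_max_right _ _))
    · exact hmem 0 1 (by simpa using h1C) (by rw [abs_one]; exact le_max_left _ _)
  set I1 : ℝ := ∫ Y in triT 1 1, |f Y| with hI1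
  have hI1nn : 0 ≤ I1 := integral_nonneg fun x => abs_nonneg _
  have hsup : ∀ X ∈ K, |f X| ≤ M * I1 := fun X hX => hkey q hq X (hsubK hX)
  have hμK : volume K < ⊤ := (isCompact_quadK 1 1 al be).measure_lt_top
  have hball : volume (Metric.closedBall (0:E2) R) ≠ ⊤ := measure_closedBall_lt_top.ne
  have hμKV : (volume K).toReal ≤ V := ENNReal.toReal_mono hball (measure_mono hsubK)
  -- bound the integral over K
  have hMI1 : 0 ≤ M * I1 := mul_nonneg (le_of_lt hM) hI1nn
  have hbdd : ∫ X in K, |f X| ^ p ≤ (M * I1) ^ p * V := by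
    have h := norm_setIntegral_le_of_norm_le_const (f := fun X => |f X| ^ p) (C := (M * I1) ^ p) hμK
      ?_
    · have h2 : ∫ X in K, |f X| ^ p ≤ ‖∫ X in K, |f X| ^ p‖ := le_abs_self _
      refine (h2.trans h).trans ?_
      exact mul_le_mul_of_nonneg_left hμKV (Real.rpow_nonneg hMI1 _)
    · intro x hx
      rw [Real.norm_eq_abs, abs_of_nonneg (Real.rpow_nonneg (abs_nonneg _) _)]
      exact Real.rpow_le_rpow (abs_nonneg _) (hsup x hx) (le_of_lt hp0)
  -- take 1/p powers
  have hLHS : (∫ X in K, |f X| ^ p) ^ (1/p) ≤ (M * I1) * max 1 V := by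
    have h1 : (∫ X in K, |f X| ^ p) ^ (1/p) ≤ ((M * I1) ^ p * V) ^ (1/p) :=
      Real.rpow_le_rpow (integral_nonneg fun x => Real.rpow_nonneg (abs_nonneg _) _)
        hbdd (by positivity)
    have h2 : ((M * I1) ^ p * V) ^ (1/p) = (M * I1) * V ^ (1/p) := by
      rw [Real.mul_rpow (Real.rpow_nonneg hMI1 _) hVnn, ← Real.rpow_mul hMI1,
        mul_one_div_cancel (ne_of_gt hp0), Real.rpow_one]
    rw [h2] at h1
    exact h1.trans (mul_le_mul_of_nonneg_left (rpow_one_div_le_max hVnn hp) hMI1)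
  have hI1le : I1 ≤ (mT + 1) * (∫ Y in triT 1 1, |f Y| ^ p) ^ (1/p) := L1_le_Lp q hp
  set A : ℝ := (∫ Y in triT 1 1, |f Y| ^ p) ^ (1/p) with hA
  calc (∫ X in K, |f X| ^ p) ^ (1/p) ≤ (M * I1) * max 1 V := hLHS
    _ ≤ (M * ((mT + 1) * A)) * max 1 V := by
        refine mul_le_mul_of_nonneg_right (mul_le_mul_of_nonneg_left hI1le (le_of_lt hM)) ?_
        exact le_trans zero_le_one (le_max_left _ _)
    _ = max 1 V * (M * (mT + 1)) * A := by ring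
/-- The diagonal scaling map. -/
def scaleMap (a b : ℝ) : E2 →ₗ[ℝ] E2 where
  toFun x := pt2 (a * x 0) (b * x 1)
  map_add' x y := by
    ext i; fin_cases i <;>
      simp [pt2, PiLp.add_apply] <;> ring
  map_smul' c x := by
    ext i; fin_cases i <;>
      simp [pt2, PiLp.smul_apply] <;> ring

lemma scaleMap_pt2 (a b x y : ℝ) : scaleMap a b (pt2 x y) = pt2 (a * x) (b * y) := by
  ext i; fin_cases i <;> simp [scaleMap, pt2]

lemma scaleMap_injective {a b : ℝ} (ha : a ≠ 0) (hb : b ≠ 0) :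
    Function.Injective (scaleMap a b) := by
  intro x y h
  have h0 : a * x 0 = a * y 0 := by
    have := congrArg (fun v : E2 => v 0) h; simpa [scaleMap, pt2] using this
  have h1 : b * x 1 = b * y 1 := by
    have := congrArg (fun v : E2 => v 1) h; simpa [scaleMap, pt2] using this
  ext i; fin_cases i
  · exact mul_left_cancel₀ ha h0
  · exact mul_left_cancel₀ hb h1

lemma integral_image_scaleMap (a b : ℝ) (ha : a ≠ 0) (hb : b ≠ 0) :
    ∃ J : ℝ, 0 ≤ J ∧ ∀ s : Set E2, MeasurableSet s → ∀ g : E2 → ℝ,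
      ∫ X in (⇑(scaleMap a b)) '' s, g X = J * ∫ X in s, g (scaleMap a b X) := by
  set D := LinearMap.toContinuousLinearMap (scaleMap a b) with hD
  refine ⟨|D.det|, abs_nonneg _, ?_⟩
  intro s hs g
  have hder : ∀ x ∈ s, HasFDerivWithinAt (⇑(scaleMap a b)) D s x := by
    intro x hx
    have := D.hasFDerivWithinAt (s := s) (x := x)
    simpa [hD] using this
  rw [integral_image_eq_integral_abs_det_fderiv_smul volume hs hder
    ((scaleMap_injective ha hb).injOn) g]
  rw [integral_smul]
  simp

lemma scaleMap_image_quadK {a b : ℝ} (ha : 0 < a) (hb : 0 < b) (ta tb : ℝ) :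
    (⇑(scaleMap a b)) '' quadK 1 1 (ta/a) (tb/b) = quadK a b ta tb := by
  unfold quadK
  rw [LinearMap.image_convexHull]
  congr 1
  have e1 : scaleMap a b (pt2 0 0) = pt2 0 0 := by rw [scaleMap_pt2]; norm_num
  have e2 : scaleMap a b (pt2 1 0) = pt2 a 0 := by rw [scaleMap_pt2]; norm_num
  have e3 : scaleMap a b (pt2 (ta/a) (tb/b)) = pt2 ta tb := by
    rw [scaleMap_pt2]; congr 1 <;> field_simp
  have e4 : scaleMap a b (pt2 0 1) = pt2 0 b := by rw [scaleMap_pt2]; norm_num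
  rw [Set.image_insert_eq, Set.image_insert_eq, Set.image_insert_eq, Set.image_singleton,
    e1, e2, e3, e4]

lemma scaleMap_image_triT {a b : ℝ} (ha : 0 < a) (hb : 0 < b) :
    (⇑(scaleMap a b)) '' triT 1 1 = triT a b := by
  unfold triT
  rw [LinearMap.image_convexHull]
  congr 1
  have e1 : scaleMap a b (pt2 0 0) = pt2 0 0 := by rw [scaleMap_pt2]; norm_num
  have e2 : scaleMap a b (pt2 1 0) = pt2 a 0 := by rw [scaleMap_pt2]; norm_num
  have e4 : scaleMap a b (pt2 0 1) = pt2 0 b := by rw [scaleMap_pt2]; norm_num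
  rw [Set.image_insert_eq, Set.image_insert_eq, Set.image_singleton, e1, e2, e4]

lemma evalPoly_scaleMap (a b : ℝ) (q : MvPolynomial (Fin 2) ℝ) (x : E2) :
    evalPoly q (scaleMap a b x) = evalPoly (scalePoly ![a, b] q) x := by
  rw [evalPoly_scalePoly]
  unfold evalPoly
  have hfun : (fun t => (scaleMap a b x) t) = (fun i => ![a, b] i * x i) := by
    funext t; fin_cases t <;> simp [scaleMap, pt2]
  exact congrArg (fun v : Fin 2 → ℝ => eval v q) hfun

/-- Comparison of `L^p` norms of polynomials of total degree `≤ k` on a convex element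
`K(a,b,ta,tb)` under (Δ1) and on the triangle `T(a,b)`:
`‖q‖_{0,p,K} ≤ C'·‖q‖_{0,p,T}` with `C' = C'(k, C)`. -/
theorem poly_norm_K_le_T (k : ℕ) (C : ℝ) (hC : 0 < C) :
    ∃ C' : ℝ, 0 < C' ∧
      ∀ a b ta tb : ℝ, 0 < a → 0 < b → 0 < ta → 0 < tb →
        1 < ta / a + tb / b →
        ta / a ≤ C → tb / b ≤ C →
        ∀ p : ℝ, 1 ≤ p →
        ∀ q : MvPolynomial (Fin 2) ℝ, q.totalDegree ≤ k →
          (∫ X in quadK a b ta tb, |evalPoly q X| ^ p) ^ (1 / p) ≤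
            C' * (∫ X in triT a b, |evalPoly q X| ^ p) ^ (1 / p) := by
  obtain ⟨C'', hC'', hred⟩ := reduced k C hC
  refine ⟨C'', hC'', ?_⟩
  intro a b ta tb ha hb hta htb hconv hCa hCb p hp q hq
  obtain ⟨J, hJ, hcov⟩ := integral_image_scaleMap a b (ne_of_gt ha) (ne_of_gt hb)
  set q' := scalePoly ![a, b] q with hq'def
  have hq' : q'.totalDegree ≤ k := (totalDegree_scalePoly_le _ _).trans hq
  have hKeq : ∫ X in quadK a b ta tb, |evalPoly q X| ^ p =
      J * ∫ X in quadK 1 1 (ta/a) (tb/b), |evalPoly q' X| ^ p := by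
    rw [← scaleMap_image_quadK ha hb ta tb,
      hcov _ (isCompact_quadK 1 1 (ta/a) (tb/b)).measurableSet]
    congr 1
    refine setIntegral_congr_fun (isCompact_quadK 1 1 (ta/a) (tb/b)).measurableSet ?_
    intro x hx
    simp only [evalPoly_scaleMap]
    rfl
  have hTeq : ∫ X in triT a b, |evalPoly q X| ^ p =
      J * ∫ X in triT 1 1, |evalPoly q' X| ^ p := by
    rw [← scaleMap_image_triT ha hb, hcov _ (isCompact_triT 1 1).measurableSet]
    congr 1
    refine setIntegral_congr_fun (isCompact_triT 1 1).measurableSet ?_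
    intro x hx
    simp only [evalPoly_scaleMap]
    rfl
  have hIK : 0 ≤ ∫ X in quadK 1 1 (ta/a) (tb/b), |evalPoly q' X| ^ p :=
    integral_nonneg fun x => Real.rpow_nonneg (abs_nonneg _) _
  have hIT : 0 ≤ ∫ X in triT 1 1, |evalPoly q' X| ^ p :=
    integral_nonneg fun x => Real.rpow_nonneg (abs_nonneg _) _
  rw [hKeq, hTeq, Real.mul_rpow hJ hIK, Real.mul_rpow hJ hIT]
  have hmain := hred (ta/a) (tb/b) (div_pos hta ha) (div_pos htb hb) hCa hCb p hp q' hq'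
  calc J ^ (1/p) * (∫ X in quadK 1 1 (ta/a) (tb/b), |evalPoly q' X| ^ p) ^ (1/p)
      ≤ J ^ (1/p) * (C'' * (∫ X in triT 1 1, |evalPoly q' X| ^ p) ^ (1/p)) :=
        mul_le_mul_of_nonneg_left hmain (Real.rpow_nonneg hJ _)
    _ = C'' * (J ^ (1/p) * (∫ X in triT 1 1, |evalPoly q' X| ^ p) ^ (1/p)) := by ring
end
end
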